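/- For each n ≥ 2, the graded Lie algebra D(n) = ⊕_{l=1}^n D_l, where D_l has dimension 2 for odd l and dimension 1 for even l, with basis v_{2k-1}, u_{2k-1} in odd degrees and w_{2k} in even degrees, and brackets [v_i, w_j] = u_{i+j}, [w_j, u_l] = v_{j+l}, [u_l, v_i] = w_{l+i} whenever the degree sum is ≤ n (and zero otherwise), is a nilpotent Lie algebra whose descending central series satisfies D(n)^m = ⊕_{l=m}^n D_l for 2 ≤ m ≤ n; in particular its nil-index equals n. -/

import Mathlib

def Dset {g : Type*} (v u w : ℕ → g) (n m : ℕ) : Set g :=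
  {z : g | ∃ l : ℕ, m ≤ l ∧ l ≤ n ∧ ((Odd l ∧ (z = v l ∨ z = u l)) ∨ (Even l ∧ z = w l))}

theorem Dspan_mono {g : Type*} [LieRing g] [LieAlgebra ℝ g] (v u w : ℕ → g) (n : ℕ)
    {m m' : ℕ} (h : m' ≤ m) :
    Submodule.span ℝ (Dset v u w n m) ≤ Submodule.span ℝ (Dset v u w n m') :=
  Submodule.span_mono (fun z ⟨l, h1, h2, h3⟩ => ⟨l, le_trans h h1, h2, h3⟩)

theorem Dbb {g : Type*} [LieRing g] [LieAlgebra ℝ g] (n : ℕ) (v u w : ℕ → g)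
    (hvw : ∀ i j : ℕ, Odd i → Even j → 1 ≤ i → i ≤ n → 1 ≤ j → j ≤ n →
      ⁅v i, w j⁆ = if i + j ≤ n then u (i + j) else 0)
    (hwu : ∀ j l : ℕ, Even j → Odd l → 1 ≤ j → j ≤ n → 1 ≤ l → l ≤ n →
      ⁅w j, u l⁆ = if j + l ≤ n then v (j + l) else 0)
    (huv : ∀ l i : ℕ, Odd l → Odd i → 1 ≤ l → l ≤ n → 1 ≤ i → i ≤ n →
      ⁅u l, v i⁆ = if l + i ≤ n then w (l + i) else 0)
    (hvvuu : ∀ i i' : ℕ, Odd i → Odd i' → 1 ≤ i → i ≤ n → 1 ≤ i' → i' ≤ n →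
      ⁅v i, v i'⁆ = 0 ∧ ⁅u i, u i'⁆ = 0)
    (hww : ∀ j j' : ℕ, Even j → Even j' → 1 ≤ j → j ≤ n → 1 ≤ j' → j' ≤ n →
      ⁅w j, w j'⁆ = 0)
    (a b : ℕ) (x y : g) (ha1 : 1 ≤ a) (ha2 : a ≤ n) (hb1 : 1 ≤ b) (hb2 : b ≤ n)
    (hx : (Odd a ∧ (x = v a ∨ x = u a)) ∨ (Even a ∧ x = w a))
    (hy : (Odd b ∧ (y = v b ∨ y = u b)) ∨ (Even b ∧ y = w b)) :
    ⁅x, y⁆ ∈ Submodule.span ℝ (Dset v u w n (a + b)) := by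
  obtain ⟨ha, rfl | rfl⟩ | ⟨ha, rfl⟩ := hx <;> obtain ⟨hb, rfl | rfl⟩ | ⟨hb, rfl⟩ := hy
  · rw [(hvvuu a b ha hb ha1 ha2 hb1 hb2).1]; exact zero_mem _
  · rw [← lie_skew, huv b a hb ha hb1 hb2 ha1 ha2]
    split_ifs with h
    · exact Submodule.neg_mem _ (Submodule.subset_span
        ⟨b + a, by omega, h, Or.inr ⟨hb.add_odd ha, rfl⟩⟩)
    · rw [neg_zero]; exact zero_mem _
  · rw [hvw a b ha hb ha1 ha2 hb1 hb2]
    split_ifs with h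
    · exact Submodule.subset_span ⟨a + b, le_refl _, h, Or.inl ⟨ha.add_even hb, Or.inr rfl⟩⟩
    · exact zero_mem _
  · rw [huv a b ha hb ha1 ha2 hb1 hb2]
    split_ifs with h
    · exact Submodule.subset_span ⟨a + b, le_refl _, h, Or.inr ⟨ha.add_odd hb, rfl⟩⟩
    · exact zero_mem _
  · rw [(hvvuu a b ha hb ha1 ha2 hb1 hb2).2]; exact zero_mem _
  · rw [← lie_skew, hwu b a hb ha hb1 hb2 ha1 ha2]
    split_ifs with h
    · exact Submodule.neg_mem _ (Submodule.subset_span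
        ⟨b + a, by omega, h, Or.inl ⟨hb.add_odd ha, Or.inl rfl⟩⟩)
    · rw [neg_zero]; exact zero_mem _
  · rw [← lie_skew, hvw b a hb ha hb1 hb2 ha1 ha2]
    split_ifs with h
    · exact Submodule.neg_mem _ (Submodule.subset_span
        ⟨b + a, by omega, h, Or.inl ⟨hb.add_even ha, Or.inr rfl⟩⟩)
    · rw [neg_zero]; exact zero_mem _
  · rw [hwu a b ha hb ha1 ha2 hb1 hb2]
    split_ifs with h
    · exact Submodule.subset_span ⟨a + b, le_refl _, h, Or.inl ⟨ha.add_odd hb, Or.inl rfl⟩⟩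
    · exact zero_mem _
  · rw [hww a b ha hb ha1 ha2 hb1 hb2]; exact zero_mem _

theorem Dkey {g : Type*} [LieRing g] [LieAlgebra ℝ g] (n : ℕ) (hn : 2 ≤ n) (v u w : ℕ → g)
    (hspan : Submodule.span ℝ
      (Set.range (fun q : {p : ℕ × Fin 3 // 1 ≤ p.1 ∧ p.1 ≤ n ∧
          ((p.2 ≠ 2 ∧ Odd p.1) ∨ (p.2 = 2 ∧ Even p.1))} =>
        if q.val.2 = 0 then v q.val.1 else if q.val.2 = 1 then u q.val.1
          else w q.val.1)) = ⊤)
    (hvw : ∀ i j : ℕ, Odd i → Even j → 1 ≤ i → i ≤ n → 1 ≤ j → j ≤ n →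
      ⁅v i, w j⁆ = if i + j ≤ n then u (i + j) else 0)
    (hwu : ∀ j l : ℕ, Even j → Odd l → 1 ≤ j → j ≤ n → 1 ≤ l → l ≤ n →
      ⁅w j, u l⁆ = if j + l ≤ n then v (j + l) else 0)
    (huv : ∀ l i : ℕ, Odd l → Odd i → 1 ≤ l → l ≤ n → 1 ≤ i → i ≤ n →
      ⁅u l, v i⁆ = if l + i ≤ n then w (l + i) else 0)
    (hvvuu : ∀ i i' : ℕ, Odd i → Odd i' → 1 ≤ i → i ≤ n → 1 ≤ i' → i' ≤ n →
      ⁅v i, v i'⁆ = 0 ∧ ⁅u i, u i'⁆ = 0)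
    (hww : ∀ j j' : ℕ, Even j → Even j' → 1 ≤ j → j ≤ n → 1 ≤ j' → j' ≤ n →
      ⁅w j, w j'⁆ = 0)
    (m : ℕ) (hm : 1 ≤ m) (N : LieSubmodule ℝ g g)
    (hN : LieSubmodule.toSubmodule N = Submodule.span ℝ (Dset v u w n m)) :
    LieSubmodule.toSubmodule (⁅(⊤ : LieIdeal ℝ g), N⁆ : LieSubmodule ℝ g g) =
      Submodule.span ℝ (Dset v u w n (m + 1)) := by
  apply le_antisymm
  · rw [LieSubmodule.lieIdeal_oper_eq_linear_span, Submodule.span_le]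
    rintro z ⟨⟨x, -⟩, ⟨y, hy⟩, rfl⟩
    rw [← LieSubmodule.mem_toSubmodule, hN] at hy
    refine Submodule.span_induction
      (p := fun y _ => ∀ x : g, ⁅x, y⁆ ∈ Submodule.span ℝ (Dset v u w n (m + 1)))
      ?_ ?_ ?_ ?_ hy x
    · rintro z ⟨l, hml, hln, hBz⟩ x
      have hx : x ∈ Submodule.span ℝ (Set.range (fun q : {p : ℕ × Fin 3 // 1 ≤ p.1 ∧ p.1 ≤ n ∧
          ((p.2 ≠ 2 ∧ Odd p.1) ∨ (p.2 = 2 ∧ Even p.1))} =>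
        if q.val.2 = 0 then v q.val.1 else if q.val.2 = 1 then u q.val.1
          else w q.val.1)) := hspan ▸ Submodule.mem_top
      refine Submodule.span_induction
        (p := fun x _ => ⁅x, z⁆ ∈ Submodule.span ℝ (Dset v u w n (m + 1)))
        ?_ ?_ ?_ ?_ hx
      · rintro x' ⟨⟨⟨a, k⟩, ha1, ha2, hk⟩, rfl⟩
        have hBx : (Odd a ∧ ((if k = 0 then v a else if k = 1 then u a else w a) = v a ∨
              (if k = 0 then v a else if k = 1 then u a else w a) = u a)) ∨
            (Even a ∧ (if k = 0 then v a else if k = 1 then u a else w a) = w a) := by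
          fin_cases k
          · rcases hk with ⟨-, ho⟩ | ⟨hk2, -⟩
            · exact Or.inl ⟨ho, Or.inl rfl⟩
            · simp at hk2
          · rcases hk with ⟨-, ho⟩ | ⟨hk2, -⟩
            · exact Or.inl ⟨ho, Or.inr rfl⟩
            · simp at hk2
          · rcases hk with ⟨hk2, -⟩ | ⟨-, he⟩
            · simp at hk2
            · exact Or.inr ⟨he, rfl⟩
        refine Dspan_mono v u w n (show m + 1 ≤ a + l by omega)
          (Dbb n v u w hvw hwu huv hvvuu hww a l _ z ha1 ha2 (by omega) hln hBx hBz)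
      · simp only [zero_lie]; exact zero_mem _
      · intro x1 x2 _ _ h1 h2; rw [add_lie]; exact add_mem h1 h2
      · intro t x1 _ h1; rw [smul_lie]; exact Submodule.smul_mem _ _ h1
    · intro x; rw [lie_zero]; exact zero_mem _
    · intro y1 y2 _ _ h1 h2 x; rw [lie_add]; exact add_mem (h1 x) (h2 x)
    · intro t y1 _ h1 x; rw [lie_smul]; exact Submodule.smul_mem _ _ (h1 x)
  · rw [Submodule.span_le]
    rintro z ⟨l, hml, hln, hBz⟩
    rw [SetLike.mem_coe, LieSubmodule.mem_toSubmodule]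
    rcases hBz with ⟨hlodd, rfl | rfl⟩ | ⟨hleven, rfl⟩
    · -- z = v l
      have hj : ∃ j : ℕ, Even j ∧ m ≤ j ∧ j + 1 ≤ l := by
        rcases Nat.even_or_odd m with he | ho
        · exact ⟨m, he, le_rfl, by omega⟩
        · refine ⟨m + 1, ho.add_one, by omega, ?_⟩
          obtain ⟨p, hp⟩ := hlodd; obtain ⟨q, hq⟩ := ho; omega
      obtain ⟨j, hje, hmj, hjl⟩ := hj
      have hj1 : 1 ≤ j := by omega
      have hlj : Odd (l - j) := Nat.Odd.sub_even (by omega) hlodd hje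
      have hb : ⁅w j, u (l - j)⁆ = v l := by
        rw [hwu j (l - j) hje hlj hj1 (by omega) (by omega) (by omega),
          if_pos (show j + (l - j) ≤ n by omega), show j + (l - j) = l by omega]
      have hmem : ⁅u (l - j), w j⁆ ∈ (⁅(⊤ : LieIdeal ℝ g), N⁆ : LieSubmodule ℝ g g) :=
        LieSubmodule.lie_mem_lie (LieSubmodule.mem_top _) (by
          rw [← LieSubmodule.mem_toSubmodule, hN]
          exact Submodule.subset_span ⟨j, hmj, by omega, Or.inr ⟨hje, rfl⟩⟩)
      have hveq : v l = -⁅u (l - j), w j⁆ := by rw [← hb, ← lie_skew]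
      rw [hveq]
      exact neg_mem hmem
    · -- z = u l
      have he : Even (l - 1) := Nat.Odd.sub_odd hlodd odd_one
      have hb : ⁅v 1, w (l - 1)⁆ = u l := by
        rw [hvw 1 (l - 1) odd_one he le_rfl (by omega) (by omega) (by omega),
          if_pos (show 1 + (l - 1) ≤ n by omega), show 1 + (l - 1) = l by omega]
      rw [← hb]
      exact LieSubmodule.lie_mem_lie (LieSubmodule.mem_top _) (by
        rw [← LieSubmodule.mem_toSubmodule, hN]
        exact Submodule.subset_span ⟨l - 1, by omega, by omega, Or.inr ⟨he, rfl⟩⟩)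
    · -- z = w l
      have ho : Odd (l - 1) := Nat.Even.sub_odd (by omega) hleven odd_one
      have hb : ⁅u 1, v (l - 1)⁆ = w l := by
        rw [huv 1 (l - 1) odd_one ho le_rfl (by omega) (by omega) (by omega),
          if_pos (show 1 + (l - 1) ≤ n by omega), show 1 + (l - 1) = l by omega]
      rw [← hb]
      exact LieSubmodule.lie_mem_lie (LieSubmodule.mem_top _) (by
        rw [← LieSubmodule.mem_toSubmodule, hN]
        exact Submodule.subset_span ⟨l - 1, by omega, by omega, Or.inl ⟨ho, Or.inl rfl⟩⟩)


/-- For `n ≥ 2`, the graded Lie algebra `D(n) = ⊕_{l=1}^n D_l`, where `D_l` is spanned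
by `v_l, u_l` for odd `l` and by `w_l` for even `l`, with brackets
`[v_i, w_j] = u_{i+j}`, `[w_j, u_l] = v_{j+l}`, `[u_l, v_i] = w_{l+i}` when the degree
sum is `≤ n` (and zero otherwise; `i, l` odd, `j` even; all other basis brackets zero),
is nilpotent with descending central series `D(n)^m = ⊕_{l=m}^n D_l` for `2 ≤ m ≤ n`;
in particular its nil-index equals `n`. -/
theorem D_n_lower_central_series
    {g : Type*} [LieRing g] [LieAlgebra ℝ g] (n : ℕ) (hn : 2 ≤ n)
    (v u w : ℕ → g)
    (hli : LinearIndependent ℝ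
      (fun q : {p : ℕ × Fin 3 // 1 ≤ p.1 ∧ p.1 ≤ n ∧
          ((p.2 ≠ 2 ∧ Odd p.1) ∨ (p.2 = 2 ∧ Even p.1))} =>
        if q.val.2 = 0 then v q.val.1 else if q.val.2 = 1 then u q.val.1 else w q.val.1))
    (hspan : Submodule.span ℝ
      (Set.range (fun q : {p : ℕ × Fin 3 // 1 ≤ p.1 ∧ p.1 ≤ n ∧
          ((p.2 ≠ 2 ∧ Odd p.1) ∨ (p.2 = 2 ∧ Even p.1))} =>
        if q.val.2 = 0 then v q.val.1 else if q.val.2 = 1 then u q.val.1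
          else w q.val.1)) = ⊤)
    (hvw : ∀ i j : ℕ, Odd i → Even j → 1 ≤ i → i ≤ n → 1 ≤ j → j ≤ n →
      ⁅v i, w j⁆ = if i + j ≤ n then u (i + j) else 0)
    (hwu : ∀ j l : ℕ, Even j → Odd l → 1 ≤ j → j ≤ n → 1 ≤ l → l ≤ n →
      ⁅w j, u l⁆ = if j + l ≤ n then v (j + l) else 0)
    (huv : ∀ l i : ℕ, Odd l → Odd i → 1 ≤ l → l ≤ n → 1 ≤ i → i ≤ n →
      ⁅u l, v i⁆ = if l + i ≤ n then w (l + i) else 0)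
    (hvvuu : ∀ i i' : ℕ, Odd i → Odd i' → 1 ≤ i → i ≤ n → 1 ≤ i' → i' ≤ n →
      ⁅v i, v i'⁆ = 0 ∧ ⁅u i, u i'⁆ = 0)
    (hww : ∀ j j' : ℕ, Even j → Even j' → 1 ≤ j → j ≤ n → 1 ≤ j' → j' ≤ n →
      ⁅w j, w j'⁆ = 0) :
    (∀ m : ℕ, 2 ≤ m → m ≤ n →
      (LieModule.lowerCentralSeries ℝ g g (m - 1)).toSubmodule =
        Submodule.span ℝ {z : g | ∃ l : ℕ, m ≤ l ∧ l ≤ n ∧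
          ((Odd l ∧ (z = v l ∨ z = u l)) ∨ (Even l ∧ z = w l))}) ∧
    LieModule.lowerCentralSeries ℝ g g (n - 1) ≠ ⊥ ∧
    LieModule.lowerCentralSeries ℝ g g n = ⊥ := by
  have h02 : (0 : Fin 3) ≠ 2 := by decide
  have h12 : (1 : Fin 3) ≠ 2 := by decide
  have hS1 : Submodule.span ℝ (Dset v u w n 1) = ⊤ := by
    rw [← hspan]
    congr 1
    ext z
    constructor
    · rintro ⟨l, h1, h2, ⟨ho, rfl | rfl⟩ | ⟨he, rfl⟩⟩
      · exact ⟨⟨(l, 0), h1, h2, Or.inl ⟨h02, ho⟩⟩, rfl⟩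
      · exact ⟨⟨(l, 1), h1, h2, Or.inl ⟨h12, ho⟩⟩, rfl⟩
      · exact ⟨⟨(l, 2), h1, h2, Or.inr ⟨rfl, he⟩⟩, rfl⟩
    · rintro ⟨⟨⟨a, k⟩, h1, h2, hk⟩, rfl⟩
      refine ⟨a, h1, h2, ?_⟩
      fin_cases k
      · rcases hk with ⟨-, ho⟩ | ⟨hk2, -⟩
        · exact Or.inl ⟨ho, Or.inl rfl⟩
        · simp at hk2
      · rcases hk with ⟨-, ho⟩ | ⟨hk2, -⟩
        · exact Or.inl ⟨ho, Or.inr rfl⟩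
        · simp at hk2
      · rcases hk with ⟨hk2, -⟩ | ⟨-, he⟩
        · simp at hk2
        · exact Or.inr ⟨he, rfl⟩
  have hLCS : ∀ k : ℕ, LieSubmodule.toSubmodule (LieModule.lowerCentralSeries ℝ g g k) =
      Submodule.span ℝ (Dset v u w n (k + 1)) := by
    intro k
    induction k with
    | zero =>
      rw [LieModule.lowerCentralSeries_zero, hS1]
      rfl
    | succ k ih =>
      rw [LieModule.lowerCentralSeries_succ]
      exact Dkey n hn v u w hspan hvw hwu huv hvvuu hww (k + 1) (by omega) _ ih
  refine ⟨?_, ?_, ?_⟩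
  · intro m hm2 hmn
    have h := hLCS (m - 1)
    rw [show m - 1 + 1 = m from by omega] at h
    exact h
  · intro hbot
    have h := hLCS (n - 1)
    rw [show n - 1 + 1 = n from by omega, hbot, LieSubmodule.bot_toSubmodule] at h
    rcases Nat.even_or_odd n with he | ho
    · have hz : w n ∈ Submodule.span ℝ (Dset v u w n n) :=
        Submodule.subset_span ⟨n, le_rfl, le_rfl, Or.inr ⟨he, rfl⟩⟩
      rw [← h, Submodule.mem_bot] at hz
      have hne := hli.ne_zero ⟨(n, 2), by omega, le_rfl, Or.inr ⟨rfl, he⟩⟩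
      exact hne hz
    · have hz : v n ∈ Submodule.span ℝ (Dset v u w n n) :=
        Submodule.subset_span ⟨n, le_rfl, le_rfl, Or.inl ⟨ho, Or.inl rfl⟩⟩
      rw [← h, Submodule.mem_bot] at hz
      have hne := hli.ne_zero ⟨(n, 0), by omega, le_rfl, Or.inl ⟨h02, ho⟩⟩
      exact hne hz
  · have h := hLCS n
    have hempty : Dset v u w n (n + 1) = ∅ := by
      ext z
      simp only [Dset, Set.mem_setOf_eq, Set.mem_empty_iff_false, iff_false]
      rintro ⟨l, h1, h2, -⟩
      omega
    rw [hempty, Submodule.span_empty] at h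
    exact (LieSubmodule.toSubmodule_eq_bot _).mp h
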